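/- Let H be a real separable Hilbert space with orthonormal basis (e_j)_{j ∈ ℕ}, M ≥ 0 and (ε_j)_{j ∈ ℕ} a summable sequence of nonnegative reals. Let F : H × H → ℂ be bounded and continuous, and suppose that for every multi-index (α, β) with finite support and α_j ≤ 2, β_j ≤ 2 for all j, the iterated directional (line) derivative ∂_x^α ∂_ξ^β F (taken along the directions (e_j, 0) with multiplicity α_j and (0, e_j) with multiplicity β_j) exists, is continuous on H × H, and satisfies |∂_x^α ∂_ξ^β F(x, ξ)| ≤ M ∏_j ε_j^{α_j + β_j}. For m ≥ 1 and t > 0 define the partial heat operator (H_{m,t} F)(x, ξ) = ∫_{ℝ^m × ℝ^m} F( x + Σ_{j<m} y_j e_j , ξ + Σ_{j<m} η_j e_j ) dγ_t^{2m}(y, η). Then for every (x, ξ) ∈ H × H, every m ≥ 1 and every t ∈ (0, 1), | (H_{m,t} F)(x, ξ) − F(x, ξ) | ≤ 2 M t Σ_{j<m} ε_j² + 4 M Σ_{j ≥ m} ε_j. -/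

import Mathlib

open MeasureTheory ProbabilityTheory

/-- The Gaussian product measure on `ℝ^m` with mean `0` and variance `t` in each coordinate. -/
noncomputable def gaussRn (m : ℕ) (t : ℝ) : Measure (Fin m → ℝ) :=
  Measure.pi fun _ => gaussianReal 0 t.toNNReal

open Real Filter
open scoped NNReal ENNReal

instance gaussRnProb (m : ℕ) (t : ℝ) : IsProbabilityMeasure (gaussRn m t) := by
  unfold gaussRn; infer_instance

lemma exp_sq_cocompact {b : ℝ} (hb : 0 < b) :
    Tendsto (fun x : ℝ => rexp (-b * x ^ 2)) (Filter.cocompact ℝ) (nhds 0) := by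
  simpa using tendsto_rpow_abs_mul_exp_neg_mul_sq_cocompact hb 0

lemma mul_exp_sq_cocompact {b : ℝ} (hb : 0 < b) :
    Tendsto (fun x : ℝ => x * rexp (-b * x ^ 2)) (Filter.cocompact ℝ) (nhds 0) := by
  have h := tendsto_rpow_abs_mul_exp_neg_mul_sq_cocompact hb 1
  rw [tendsto_zero_iff_norm_tendsto_zero]
  refine h.congr (fun x => ?_)
  rw [Real.rpow_one, Real.norm_eq_abs, abs_mul, abs_of_pos (exp_pos _)]

lemma hasDerivAt_exp_sq {b : ℝ} (x : ℝ) :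
    HasDerivAt (fun x : ℝ => rexp (-b * x ^ 2)) (-2 * b * x * rexp (-b * x ^ 2)) x := by
  have h1 : HasDerivAt (fun x : ℝ => -b * x ^ 2) (-2 * b * x) x := by
    have := (hasDerivAt_pow 2 x).const_mul (-b)
    exact this.congr_deriv (by rw [show (2:ℕ) - 1 = 1 from rfl]; push_cast; ring)
  simpa [mul_comm] using h1.exp

lemma integral_mul_exp_eq_zero {b : ℝ} (hb : 0 < b) :
    ∫ x : ℝ, x * rexp (-b * x ^ 2) = 0 := by
  set f : ℝ → ℝ := fun x => -(2 * b)⁻¹ * rexp (-b * x ^ 2) with hf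
  have hderiv : ∀ x : ℝ, HasDerivAt f (x * rexp (-b * x ^ 2)) x := by
    intro x
    have h2 := (hasDerivAt_exp_sq (b := b) x).const_mul (-(2 * b)⁻¹)
    refine h2.congr_deriv ?_
    field_simp
  have hint : Integrable (fun x : ℝ => x * rexp (-b * x ^ 2)) := integrable_mul_exp_neg_mul_sq hb
  have hco : Tendsto f (Filter.cocompact ℝ) (nhds 0) := by
    have := (exp_sq_cocompact hb).const_mul (-(2 * b)⁻¹)
    rwa [mul_zero] at this
  have h1 : ∫ x in Set.Ioi (0:ℝ), x * rexp (-b * x ^ 2) = 0 - f 0 :=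
    integral_Ioi_of_hasDerivAt_of_tendsto (hderiv 0).continuousAt.continuousWithinAt
      (fun x _ => hderiv x) hint.integrableOn (hco.mono_left _root_.atTop_le_cocompact)
  have h2 : ∫ x in Set.Iic (0:ℝ), x * rexp (-b * x ^ 2) = f 0 - 0 :=
    integral_Iic_of_hasDerivAt_of_tendsto (hderiv 0).continuousAt.continuousWithinAt
      (fun x _ => hderiv x) hint.integrableOn (hco.mono_left _root_.atBot_le_cocompact)
  have h3 := intervalIntegral.integral_Iic_add_Ioi (μ := volume) (b := (0:ℝ)) hint.integrableOn hint.integrableOn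
  rw [← h3, h1, h2]
  ring

lemma integrable_sq_mul_exp {b : ℝ} (hb : 0 < b) :
    Integrable (fun x : ℝ => x ^ 2 * rexp (-b * x ^ 2)) := by
  have := integrable_rpow_mul_exp_neg_mul_sq hb (s := 2) (by norm_num)
  refine this.congr (Filter.Eventually.of_forall fun x => ?_)
  have : x ^ (2:ℝ) = x ^ (2:ℕ) := by
    rw [← Real.rpow_natCast x 2]; norm_num
  simp only [this]

lemma integral_sq_mul_exp {b : ℝ} (hb : 0 < b) :
    ∫ x : ℝ, x ^ 2 * rexp (-b * x ^ 2) = (2 * b)⁻¹ * √(π / b) := by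
  set f : ℝ → ℝ := fun x => -(2 * b)⁻¹ * x * rexp (-b * x ^ 2) with hf
  set g : ℝ → ℝ := fun x => x ^ 2 * rexp (-b * x ^ 2) - (2 * b)⁻¹ * rexp (-b * x ^ 2) with hg
  have hderiv : ∀ x : ℝ, HasDerivAt f (g x) x := by
    intro x
    have h2 := ((hasDerivAt_id x).const_mul (-(2 * b)⁻¹)).mul (hasDerivAt_exp_sq (b := b) x)
    refine h2.congr_deriv ?_
    simp only [hg, mul_one, id]
    field_simp
    ring
  have hintg : Integrable g :=
    (integrable_sq_mul_exp hb).sub ((integrable_exp_neg_mul_sq hb).const_mul _)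
  have hco : Tendsto f (Filter.cocompact ℝ) (nhds 0) := by
    have := (mul_exp_sq_cocompact hb).const_mul (-(2 * b)⁻¹)
    rw [mul_zero] at this
    exact this.congr (fun x => by ring)
  have h1 : ∫ x in Set.Ioi (0:ℝ), g x = 0 - f 0 :=
    integral_Ioi_of_hasDerivAt_of_tendsto (hderiv 0).continuousAt.continuousWithinAt
      (fun x _ => hderiv x) hintg.integrableOn (hco.mono_left _root_.atTop_le_cocompact)
  have h2 : ∫ x in Set.Iic (0:ℝ), g x = f 0 - 0 :=
    integral_Iic_of_hasDerivAt_of_tendsto (hderiv 0).continuousAt.continuousWithinAt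
      (fun x _ => hderiv x) hintg.integrableOn (hco.mono_left _root_.atBot_le_cocompact)
  have h3 := intervalIntegral.integral_Iic_add_Ioi (μ := volume) (b := (0:ℝ)) hintg.integrableOn hintg.integrableOn
  have h4 : ∫ x : ℝ, g x = 0 := by rw [← h3, h1, h2]; ring
  have h5 : ∫ x : ℝ, g x = (∫ x : ℝ, x ^ 2 * rexp (-b * x ^ 2))
      - (2 * b)⁻¹ * ∫ x : ℝ, rexp (-b * x ^ 2) := by
    rw [integral_sub (integrable_sq_mul_exp hb) ((integrable_exp_neg_mul_sq hb).const_mul _),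
      integral_const_mul]
  rw [h4] at h5
  rw [← integral_gaussian]
  linarith

lemma integral_gaussianReal_eq {v : NNReal} (hv : v ≠ 0) (g : ℝ → ℝ) :
    ∫ x, g x ∂(gaussianReal 0 v) = ∫ x, gaussianPDFReal 0 v x * g x := by
  rw [gaussianReal_of_var_ne_zero _ hv]
  have hd : (gaussianPDF 0 v)
      = fun x => ((Real.toNNReal (gaussianPDFReal 0 v x) : ℝ≥0) : ℝ≥0∞) := rfl
  rw [hd, integral_withDensity_eq_integral_smul
    ((measurable_gaussianPDFReal 0 v).real_toNNReal) g]
  congr 1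
  ext x
  simp [NNReal.smul_def, Real.coe_toNNReal _ (gaussianPDFReal_nonneg 0 v x)]

lemma integrable_gaussianReal_iff {v : NNReal} (hv : v ≠ 0) (g : ℝ → ℝ) :
    Integrable g (gaussianReal 0 v) ↔ Integrable (fun x => gaussianPDFReal 0 v x * g x) := by
  rw [gaussianReal_of_var_ne_zero _ hv]
  have hd : (gaussianPDF 0 v)
      = fun x => ((Real.toNNReal (gaussianPDFReal 0 v x) : ℝ≥0) : ℝ≥0∞) := rfl
  rw [hd, integrable_withDensity_iff_integrable_smul
    ((measurable_gaussianPDFReal 0 v).real_toNNReal)]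
  constructor <;> intro h <;> refine h.congr (Filter.Eventually.of_forall fun x => ?_) <;>
    simp [Real.coe_toNNReal _ (gaussianPDFReal_nonneg 0 v x), NNReal.smul_def]

section moments
variable {t : ℝ}

lemma pdf_rewrite (ht : 0 < t) (x : ℝ) :
    gaussianPDFReal 0 t.toNNReal x = (√(2 * π * t))⁻¹ * rexp (-(2 * t)⁻¹ * x ^ 2) := by
  rw [gaussianPDFReal]
  rw [Real.coe_toNNReal _ ht.le]
  congr 1
  rw [sub_zero]
  congr 1
  field_simp

lemma integrable_id_gaussianReal (ht : 0 < t) : Integrable (fun x : ℝ => x) (gaussianReal 0 t.toNNReal) := by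
  have hb : 0 < (2 * t)⁻¹ := by positivity
  rw [integrable_gaussianReal_iff (by simpa [Real.toNNReal_eq_zero] using not_le.mpr ht) _]
  have : Integrable (fun x : ℝ => (√(2 * π * t))⁻¹ * (x * rexp (-(2 * t)⁻¹ * x ^ 2))) :=
    (integrable_mul_exp_neg_mul_sq hb).const_mul _
  refine this.congr (Filter.Eventually.of_forall fun x => ?_)
  simp only [pdf_rewrite ht]
  ring

lemma integrable_sq_gaussianReal (ht : 0 < t) :
    Integrable (fun x : ℝ => x ^ 2) (gaussianReal 0 t.toNNReal) := by
  have hb : 0 < (2 * t)⁻¹ := by positivity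
  rw [integrable_gaussianReal_iff (by simpa [Real.toNNReal_eq_zero] using not_le.mpr ht) _]
  have : Integrable (fun x : ℝ => (√(2 * π * t))⁻¹ * (x ^ 2 * rexp (-(2 * t)⁻¹ * x ^ 2))) :=
    (integrable_sq_mul_exp hb).const_mul _
  refine this.congr (Filter.Eventually.of_forall fun x => ?_)
  simp only [pdf_rewrite ht]
  ring

lemma integral_id_gaussianReal' (ht : 0 < t) : ∫ x, x ∂(gaussianReal 0 t.toNNReal) = 0 := by
  have hb : 0 < (2 * t)⁻¹ := by positivity
  rw [integral_gaussianReal_eq (by simpa [Real.toNNReal_eq_zero] using not_le.mpr ht) _]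
  have : ∀ x : ℝ, gaussianPDFReal 0 t.toNNReal x * x
      = (√(2 * π * t))⁻¹ * (x * rexp (-(2 * t)⁻¹ * x ^ 2)) := by
    intro x; rw [pdf_rewrite ht]; ring
  simp only [this]
  rw [integral_const_mul, integral_mul_exp_eq_zero hb, mul_zero]

lemma integral_sq_gaussianReal' (ht : 0 < t) : ∫ x, x ^ 2 ∂(gaussianReal 0 t.toNNReal) = t := by
  have hb : 0 < (2 * t)⁻¹ := by positivity
  rw [integral_gaussianReal_eq (by simpa [Real.toNNReal_eq_zero] using not_le.mpr ht) _]
  have : ∀ x : ℝ, gaussianPDFReal 0 t.toNNReal x * x ^ 2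
      = (√(2 * π * t))⁻¹ * (x ^ 2 * rexp (-(2 * t)⁻¹ * x ^ 2)) := by
    intro x; rw [pdf_rewrite ht]; ring
  simp only [this]
  rw [integral_const_mul, integral_sq_mul_exp hb]
  have h1 : (2 * (2 * t)⁻¹)⁻¹ = t := by field_simp
  have h2 : π / (2 * t)⁻¹ = 2 * π * t := by field_simp
  rw [h1, h2]
  rw [inv_mul_eq_div, mul_div_assoc, div_self (by positivity : √(2 * π * t) ≠ 0), mul_one]

end moments

lemma one_dim {t : ℝ} (ht : 0 < t) (g g1 g2 : ℝ → ℂ) (hgc : Continuous g)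
    {B : ℝ} (hgb : ∀ s, ‖g s‖ ≤ B)
    (h1 : ∀ s, HasDerivAt g (g1 s) s) (h2 : ∀ s, HasDerivAt g1 (g2 s) s)
    {c : ℝ} (hc : 0 ≤ c) (hb2 : ∀ s, ‖g2 s‖ ≤ c) :
    ‖(∫ y, g y ∂(gaussianReal 0 t.toNNReal)) - g 0‖ ≤ c * t := by
  set γ := gaussianReal 0 t.toNNReal with hγ
  have intg : Integrable g γ :=
    ⟨hgc.aestronglyMeasurable, HasFiniteIntegral.of_bounded (ae_of_all _ hgb)⟩
  have intlin : Integrable (fun y : ℝ => y • g1 0) γ :=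
    (integrable_id_gaussianReal ht).smul_const (g1 0)
  have taylor : ∀ y : ℝ, ‖g y - g 0 - y • g1 0‖ ≤ c * y ^ 2 := by
    intro y
    have mvt1 : ∀ a : ℝ, ‖g1 a - g1 0‖ ≤ c * |a| := by
      intro a
      have := convex_univ.norm_image_sub_le_of_norm_hasDerivWithin_le
        (f := g1) (f' := g2) (fun x _ => (h2 x).hasDerivWithinAt)
        (fun x _ => hb2 x) (Set.mem_univ (0:ℝ)) (Set.mem_univ a)
      simpa [Real.norm_eq_abs] using this
    have hF : ∀ x : ℝ, HasDerivAt (fun x : ℝ => g x - x • g1 0) (g1 x - g1 0) x := by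
      intro x
      have := (hasDerivAt_id x).smul_const (g1 0)
      rw [one_smul] at this
      exact (h1 x).sub this
    have key := (convex_uIcc (0:ℝ) y).norm_image_sub_le_of_norm_hasDerivWithin_le
      (f := fun x : ℝ => g x - x • g1 0) (f' := fun x => g1 x - g1 0)
      (fun x _ => (hF x).hasDerivWithinAt) (C := c * |y|)
      (fun x hx => by
        refine (mvt1 x).trans ?_
        have hxy : |x| ≤ |y| := by
          rcases Set.mem_uIcc.1 hx with ⟨ha, hb⟩ | ⟨ha, hb⟩
          · simpa using abs_le_max_abs_abs ha hb
          · simpa using abs_le_max_abs_abs ha hb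
        exact mul_le_mul_of_nonneg_left hxy hc)
      Set.right_mem_uIcc Set.left_mem_uIcc
    rw [norm_sub_rev] at key
    simp only [zero_smul, sub_zero, zero_sub, norm_neg, Real.norm_eq_abs] at key
    rw [sub_right_comm]
    refine key.trans ?_
    rw [mul_assoc, ← abs_mul, ← sq, abs_sq]
  have hzero : ∫ y : ℝ, y • g1 0 ∂γ = 0 := by
    rw [integral_smul_const, hγ, integral_id_gaussianReal' ht, zero_smul]
  have key2 : ∫ y, (g y - g 0 - y • g1 0) ∂γ = (∫ y, g y ∂γ) - g 0 := by
    have e1 : ∫ y, (g y - g 0 - y • g1 0) ∂γ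
        = (∫ y, (g y - g 0) ∂γ) - ∫ y, y • g1 0 ∂γ :=
      integral_sub (intg.sub (integrable_const (g 0))) intlin
    have e2 : ∫ y, (g y - g 0) ∂γ = (∫ y, g y ∂γ) - ∫ _, (g 0 : ℂ) ∂γ :=
      integral_sub intg (integrable_const (g 0))
    rw [e1, e2, hzero, integral_const]
    simp
  rw [← key2]
  have intbound : Integrable (fun y : ℝ => c * y ^ 2) γ :=
    (integrable_sq_gaussianReal ht).const_mul c
  calc ‖∫ y, (g y - g 0 - y • g1 0) ∂γ‖
      ≤ ∫ y, c * y ^ 2 ∂γ :=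
        norm_integral_le_of_norm_le intbound (ae_of_all _ taylor)
    _ = c * t := by rw [integral_const_mul, hγ, integral_sq_gaussianReal' ht]

lemma line_shift {E : Type*} [NormedAddCommGroup E] [NormedSpace ℝ E]
    (f : E → ℂ) (L : ℂ) (P : E) (v : E) (a : ℝ)
    (h : HasLineDerivAt ℝ f L (P + a • v) v) :
    HasDerivAt (fun s : ℝ => f (P + s • v)) L a := by
  unfold HasLineDerivAt at h
  have h' : HasDerivAt (fun τ : ℝ => f (P + a • v + τ • v)) L (-a + a) := by
    rwa [neg_add_cancel]
  have hcomp := HasDerivAt.comp_const_add (-a) a h'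
  have hfun : (fun s : ℝ => f (P + a • v + (-a + s) • v))
      = fun s : ℝ => f (P + s • v) := by
    funext s
    rw [add_assoc, ← add_smul]
    have : a + (-a + s) = s := by ring
    rw [this]
  rwa [hfun] at hcomp

lemma multi_dim {E : Type*} [NormedAddCommGroup E] [NormedSpace ℝ E]
    {t : ℝ} (ht : 0 < t)
    (Φ : E → ℂ) (Φ1 Φ2 : ℕ → E → ℂ) (v : ℕ → E) (c : ℕ → ℝ)
    (hΦc : Continuous Φ) {B : ℝ} (hΦb : ∀ P, ‖Φ P‖ ≤ B)
    (h1 : ∀ j P, HasLineDerivAt ℝ Φ (Φ1 j P) P (v j))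
    (h2 : ∀ j P, HasLineDerivAt ℝ (Φ1 j) (Φ2 j P) P (v j))
    (hc : ∀ j, 0 ≤ c j) (hb2 : ∀ j P, ‖Φ2 j P‖ ≤ c j) :
    ∀ (n : ℕ) (P : E),
      ‖(∫ y : Fin n → ℝ, Φ (P + ∑ j : Fin n, y j • v (j : ℕ)) ∂(gaussRn n t)) - Φ P‖
        ≤ t * ∑ j ∈ Finset.range n, c j := by
  intro n
  induction n with
  | zero =>
      intro P
      simp
  | succ n IH =>
      intro P
      set A : ℝ × (Fin n → ℝ) → E :=
        fun z => P + z.1 • v n + ∑ j : Fin n, z.2 j • v (j : ℕ) with hA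
      have hAc : Continuous A := by
        apply Continuous.add
        · exact continuous_const.add (continuous_fst.smul continuous_const)
        · exact continuous_finset_sum _ fun j _ =>
            ((continuous_apply j).comp continuous_snd).smul continuous_const
      have hmp := measurePreserving_piFinSuccAbove
        (fun _ : Fin (n + 1) => gaussianReal 0 t.toNNReal) (Fin.last n)
      have hsum : ∀ q : Fin (n + 1) → ℝ,
          (P + ∑ j : Fin (n + 1), q j • v (j : ℕ))
            = A ((MeasurableEquiv.piFinSuccAbove (fun _ : Fin (n + 1) => ℝ) (Fin.last n)) q) := by
        intro q
        simp only [hA, MeasurableEquiv.piFinSuccAbove_apply, Fin.insertNthEquiv_symm_apply,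
          Fin.removeNth, Fin.succAbove_last, Fin.val_last, Fin.coe_castSucc]
        rw [Fin.sum_univ_castSucc]
        simp only [Fin.coe_castSucc, Fin.val_last]
        abel
      have hsplit :
          (∫ y : Fin (n + 1) → ℝ, Φ (P + ∑ j : Fin (n + 1), y j • v (j : ℕ))
            ∂(gaussRn (n + 1) t))
          = ∫ z : ℝ × (Fin n → ℝ),
              Φ (A z) ∂((gaussianReal 0 t.toNNReal).prod (gaussRn n t)) := by
        calc (∫ y : Fin (n + 1) → ℝ, Φ (P + ∑ j : Fin (n + 1), y j • v (j : ℕ))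
                ∂(gaussRn (n + 1) t))
            = ∫ y : Fin (n + 1) → ℝ,
                Φ (A ((MeasurableEquiv.piFinSuccAbove (fun _ : Fin (n + 1) => ℝ)
                  (Fin.last n)) y)) ∂(gaussRn (n + 1) t) := by
              exact integral_congr_ae (ae_of_all _ fun q => congrArg Φ (hsum q))
          _ = _ := hmp.integral_comp (MeasurableEquiv.piFinSuccAbove
                (fun _ : Fin (n + 1) => ℝ) (Fin.last n)).measurableEmbedding (fun z => Φ (A z))
      have hintA : Integrable (fun z => Φ (A z))
          ((gaussianReal 0 t.toNNReal).prod (gaussRn n t)) :=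
        ⟨(hΦc.comp hAc).aestronglyMeasurable,
          HasFiniteIntegral.of_bounded (ae_of_all _ fun z => hΦb (A z))⟩
      have hprod : ∫ z : ℝ × (Fin n → ℝ),
            Φ (A z) ∂((gaussianReal 0 t.toNNReal).prod (gaussRn n t))
          = ∫ a : ℝ, (∫ y : Fin n → ℝ, Φ (A (a, y)) ∂(gaussRn n t))
              ∂(gaussianReal 0 t.toNNReal) := integral_prod _ hintA
      set g : ℝ → ℂ := fun a => Φ (P + a • v n) with hg
      set inn : ℝ → ℂ := fun a => ∫ y : Fin n → ℝ, Φ (A (a, y)) ∂(gaussRn n t) with hinn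
      have hIH : ∀ a : ℝ, ‖inn a - g a‖ ≤ t * ∑ j ∈ Finset.range n, c j := by
        intro a
        exact IH (P + a • v n)
      have hgc : Continuous g := hΦc.comp (continuous_const.add (continuous_id.smul
        continuous_const))
      have hgint : Integrable g (gaussianReal 0 t.toNNReal) :=
        ⟨hgc.aestronglyMeasurable,
          HasFiniteIntegral.of_bounded (ae_of_all _ fun a => hΦb _)⟩
      have hinnint : Integrable inn (gaussianReal 0 t.toNNReal) :=
        hintA.integral_prod_left
      have hone : ‖(∫ a, g a ∂(gaussianReal 0 t.toNNReal)) - g 0‖ ≤ c n * t := by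
        refine one_dim ht g (fun a => Φ1 n (P + a • v n)) (fun a => Φ2 n (P + a • v n))
          hgc (fun a => hΦb _) (fun a => line_shift Φ _ P (v n) a (h1 n _))
          (fun a => line_shift (Φ1 n) _ P (v n) a (h2 n _)) (hc n) (fun a => hb2 n _)
      have hfirst : ‖∫ a, (inn a - g a) ∂(gaussianReal 0 t.toNNReal)‖
          ≤ t * ∑ j ∈ Finset.range n, c j := by
        refine (norm_integral_le_of_norm_le (integrable_const _)
          (ae_of_all _ fun a => hIH a)).trans ?_
        rw [integral_const]
        simp
      have hsub : ∫ a, (inn a - g a) ∂(gaussianReal 0 t.toNNReal)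
          = (∫ a, inn a ∂(gaussianReal 0 t.toNNReal))
            - ∫ a, g a ∂(gaussianReal 0 t.toNNReal) :=
        integral_sub hinnint hgint
      have hg0 : g 0 = Φ P := by simp [hg]
      rw [hsplit, hprod]
      have : (∫ a, inn a ∂(gaussianReal 0 t.toNNReal)) - Φ P
          = (∫ a, (inn a - g a) ∂(gaussianReal 0 t.toNNReal))
            + ((∫ a, g a ∂(gaussianReal 0 t.toNNReal)) - g 0) := by
        rw [hsub, hg0]; abel
      rw [show (∫ a : ℝ, (∫ y : Fin n → ℝ, Φ (A (a, y)) ∂(gaussRn n t))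
          ∂(gaussianReal 0 t.toNNReal)) = ∫ a, inn a ∂(gaussianReal 0 t.toNNReal) from rfl,
        this]
      calc ‖_ + _‖ ≤ ‖∫ a, (inn a - g a) ∂(gaussianReal 0 t.toNNReal)‖
            + ‖(∫ a, g a ∂(gaussianReal 0 t.toNNReal)) - g 0‖ := norm_add_le _ _
        _ ≤ t * (∑ j ∈ Finset.range n, c j) + c n * t := add_le_add hfirst hone
        _ = t * ∑ j ∈ Finset.range (n + 1), c j := by
            rw [Finset.sum_range_succ]; ring

/-- Quantitative form of Proposition 2.3: for a symbol `F` of class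
`S₂(M,ε)` (encoded by the family `D α β` of its iterated line derivatives along the
orthonormal basis directions, for multi-indices `α, β` with entries `≤ 2`), the partial
heat operator acting on the first `m` coordinates satisfies
`|(H_{m,t}F)(x,ξ) − F(x,ξ)| ≤ 2 M t Σ_{j<m} ε_j² + 4 M Σ_{j≥m} ε_j` for `0 < t < 1`. -/
theorem partial_heat_approx
    {H : Type*} [NormedAddCommGroup H] [InnerProductSpace ℝ H] [CompleteSpace H]
    (e : HilbertBasis ℕ ℝ H)
    (M : ℝ) (hM : 0 ≤ M) (ε : ℕ → ℝ) (hε : ∀ j, 0 ≤ ε j) (hsum : Summable ε)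
    (F : H × H → ℂ)
    (D : (ℕ →₀ ℕ) → (ℕ →₀ ℕ) → (H × H → ℂ))
    (hD0 : D 0 0 = F)
    (hcont : ∀ α β : ℕ →₀ ℕ, (∀ j, α j ≤ 2) → (∀ j, β j ≤ 2) → Continuous (D α β))
    (hbound : ∀ α β : ℕ →₀ ℕ, (∀ j, α j ≤ 2) → (∀ j, β j ≤ 2) → ∀ P : H × H,
      ‖D α β P‖ ≤ M * (α + β).prod fun j k => ε j ^ k)
    (hstepx : ∀ α β : ℕ →₀ ℕ, (∀ j, α j ≤ 2) → (∀ j, β j ≤ 2) → ∀ j : ℕ, α j < 2 →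
      ∀ P : H × H, HasLineDerivAt ℝ (D α β) (D (α + Finsupp.single j 1) β P) P ((e j : H), 0))
    (hstepξ : ∀ α β : ℕ →₀ ℕ, (∀ j, α j ≤ 2) → (∀ j, β j ≤ 2) → ∀ j : ℕ, β j < 2 →
      ∀ P : H × H, HasLineDerivAt ℝ (D α β) (D α (β + Finsupp.single j 1) P) P (0, (e j : H)))
    (m : ℕ) (hm : 1 ≤ m) (t : ℝ) (ht0 : 0 < t) (ht1 : t < 1) (x ξ : H) :
    ‖(∫ p : (Fin m → ℝ) × (Fin m → ℝ),
          F (x + ∑ j : Fin m, p.1 j • (e (j : ℕ) : H),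
             ξ + ∑ j : Fin m, p.2 j • (e (j : ℕ) : H))
        ∂((gaussRn m t).prod (gaussRn m t)))
      - F (x, ξ)‖
    ≤ 2 * M * t * (∑ j ∈ Finset.range m, (ε j) ^ 2) + 4 * M * ∑' j : ℕ, ε (m + j) := by
  classical
  -- basic facts about the multi-index entries
  have hzero2 : ∀ j : ℕ, (0 : ℕ →₀ ℕ) j ≤ 2 := by simp
  have hsingle1 : ∀ k j : ℕ, (Finsupp.single k 1) j ≤ 2 := by
    intro k j
    rcases eq_or_ne k j with h | h
    · simp [h, Finsupp.single_apply]
    · simp [Finsupp.single_apply, h]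
  have hFc : Continuous F := hD0 ▸ hcont 0 0 hzero2 hzero2
  have hFb : ∀ P : H × H, ‖F P‖ ≤ M := by
    intro P
    have := hbound 0 0 hzero2 hzero2 P
    simpa [hD0] using this
  have hsingle2bound : ∀ (α β : ℕ →₀ ℕ), (∀ j, α j ≤ 2) → (∀ j, β j ≤ 2) → True := fun _ _ _ _ => trivial
  -- the two families of derivatives, for the ξ and x directions
  have hb2ξ : ∀ (j : ℕ) (P : H × H), ‖D 0 (Finsupp.single j 2) P‖ ≤ M * ε j ^ 2 := by
    intro j P
    have h2le : ∀ k : ℕ, (Finsupp.single j 2) k ≤ 2 := by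
      intro k
      rcases eq_or_ne j k with h | h
      · simp [h, Finsupp.single_apply]
      · simp [Finsupp.single_apply, h]
    have := hbound 0 (Finsupp.single j 2) hzero2 h2le P
    rwa [zero_add, Finsupp.prod_single_index (by simp)] at this
  have hb2x : ∀ (j : ℕ) (P : H × H), ‖D (Finsupp.single j 2) 0 P‖ ≤ M * ε j ^ 2 := by
    intro j P
    have h2le : ∀ k : ℕ, (Finsupp.single j 2) k ≤ 2 := by
      intro k
      rcases eq_or_ne j k with h | h
      · simp [h, Finsupp.single_apply]
      · simp [Finsupp.single_apply, h]
    have := hbound (Finsupp.single j 2) 0 h2le hzero2 P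
    rwa [add_zero, Finsupp.prod_single_index (by simp)] at this
  have h1ξ : ∀ (j : ℕ) (P : H × H),
      HasLineDerivAt ℝ F (D 0 (Finsupp.single j 1) P) P ((0 : H), (e j : H)) := by
    intro j P
    have := hstepξ 0 0 hzero2 hzero2 j (by simp) P
    rwa [hD0, zero_add] at this
  have h2ξ : ∀ (j : ℕ) (P : H × H),
      HasLineDerivAt ℝ (D 0 (Finsupp.single j 1)) (D 0 (Finsupp.single j 2) P) P
        ((0 : H), (e j : H)) := by
    intro j P
    have := hstepξ 0 (Finsupp.single j 1) hzero2 (hsingle1 j) j (by simp) P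
    rwa [show Finsupp.single j 1 + Finsupp.single j 1 = Finsupp.single j 2 by
      rw [← Finsupp.single_add]] at this
  have h1x : ∀ (j : ℕ) (P : H × H),
      HasLineDerivAt ℝ F (D (Finsupp.single j 1) 0 P) P ((e j : H), (0 : H)) := by
    intro j P
    have := hstepx 0 0 hzero2 hzero2 j (by simp) P
    rwa [hD0, zero_add] at this
  have h2x : ∀ (j : ℕ) (P : H × H),
      HasLineDerivAt ℝ (D (Finsupp.single j 1) 0) (D (Finsupp.single j 2) 0 P) P
        ((e j : H), (0 : H)) := by
    intro j P
    have := hstepx (Finsupp.single j 1) 0 (hsingle1 j) hzero2 j (by simp) P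
    rwa [show Finsupp.single j 1 + Finsupp.single j 1 = Finsupp.single j 2 by
      rw [← Finsupp.single_add]] at this
  have hcnn : ∀ j : ℕ, (0:ℝ) ≤ M * ε j ^ 2 := fun j => by positivity
  -- multi_dim in the ξ directions
  have hmdξ := multi_dim ht0 F (fun j => D 0 (Finsupp.single j 1))
    (fun j => D 0 (Finsupp.single j 2)) (fun j => ((0 : H), (e j : H)))
    (fun j => M * ε j ^ 2) hFc hFb h1ξ h2ξ hcnn hb2ξ m
  have hmdx := multi_dim ht0 F (fun j => D (Finsupp.single j 1) 0)
    (fun j => D (Finsupp.single j 2) 0) (fun j => ((e j : H), (0 : H)))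
    (fun j => M * ε j ^ 2) hFc hFb h1x h2x hcnn hb2x m
  -- rewriting sums of pairs
  have hpairξ : ∀ (P₁ P₂ : H) (η : Fin m → ℝ),
      ((P₁, P₂) : H × H) + ∑ j : Fin m, η j • (((0 : H), (e (j : ℕ) : H)))
        = (P₁, P₂ + ∑ j : Fin m, η j • (e (j : ℕ) : H)) := by
    intro P₁ P₂ η
    have : (∑ j : Fin m, η j • (((0 : H), (e (j : ℕ) : H))))
        = ((0 : H), ∑ j : Fin m, η j • (e (j : ℕ) : H)) := by
      rw [Prod.ext_iff]
      constructor
      · rw [Prod.fst_sum]; simp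
      · rw [Prod.snd_sum]; simp
    rw [this, Prod.mk_add_mk, add_zero]
  have hpairx : ∀ (P₁ P₂ : H) (y : Fin m → ℝ),
      ((P₁, P₂) : H × H) + ∑ j : Fin m, y j • (((e (j : ℕ) : H), (0 : H)))
        = (P₁ + ∑ j : Fin m, y j • (e (j : ℕ) : H), P₂) := by
    intro P₁ P₂ y
    have : (∑ j : Fin m, y j • (((e (j : ℕ) : H), (0 : H))))
        = (∑ j : Fin m, y j • (e (j : ℕ) : H), (0 : H)) := by
      rw [Prod.ext_iff]
      constructor
      · rw [Prod.fst_sum]; simp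
      · rw [Prod.snd_sum]; simp
    rw [this, Prod.mk_add_mk, add_zero]
  -- Fubini
  set γm := gaussRn m t with hγm
  have hintf : Integrable (fun p : (Fin m → ℝ) × (Fin m → ℝ) =>
      F (x + ∑ j : Fin m, p.1 j • (e (j : ℕ) : H),
         ξ + ∑ j : Fin m, p.2 j • (e (j : ℕ) : H))) (γm.prod γm) := by
    refine ⟨(hFc.comp ?_).aestronglyMeasurable,
      HasFiniteIntegral.of_bounded (ae_of_all _ fun p => hFb _)⟩
    apply Continuous.prodMk
    · exact continuous_const.add (continuous_finset_sum _ fun j _ =>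
        ((continuous_apply j).comp continuous_fst).smul continuous_const)
    · exact continuous_const.add (continuous_finset_sum _ fun j _ =>
        ((continuous_apply j).comp continuous_snd).smul continuous_const)
  have hfub := integral_prod _ hintf
  rw [hfub]
  set X : (Fin m → ℝ) → H := fun y => x + ∑ j : Fin m, y j • (e (j : ℕ) : H) with hX
  set inn : (Fin m → ℝ) → ℂ := fun y =>
    ∫ η : Fin m → ℝ, F (X y, ξ + ∑ j : Fin m, η j • (e (j : ℕ) : H)) ∂γm with hinn
  -- inner bound
  have hinner : ∀ y : Fin m → ℝ,
      ‖inn y - F (X y, ξ)‖ ≤ t * ∑ j ∈ Finset.range m, M * ε j ^ 2 := by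
    intro y
    have := hmdξ ((X y, ξ))
    refine le_trans (le_of_eq ?_) this
    congr 1
    congr 1
    exact integral_congr_ae (ae_of_all _ fun η => (congrArg F (hpairξ (X y) ξ η)).symm)
  -- outer bound
  have houter : ‖(∫ y : Fin m → ℝ, F (X y, ξ) ∂γm) - F (x, ξ)‖
      ≤ t * ∑ j ∈ Finset.range m, M * ε j ^ 2 := by
    have := hmdx ((x, ξ))
    refine le_trans (le_of_eq ?_) this
    congr 1
    congr 1
    exact integral_congr_ae (ae_of_all _ fun y => (congrArg F (hpairx x ξ y)).symm)
  -- integrability of the two outer integrands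
  have hinnint : Integrable inn γm := by
    have : Integrable (fun z : (Fin m → ℝ) × (Fin m → ℝ) =>
        F (X z.1, ξ + ∑ j : Fin m, z.2 j • (e (j : ℕ) : H))) (γm.prod γm) := hintf
    exact this.integral_prod_left
  have hgint : Integrable (fun y : Fin m → ℝ => F (X y, ξ)) γm := by
    refine ⟨(hFc.comp ?_).aestronglyMeasurable,
      HasFiniteIntegral.of_bounded (ae_of_all _ fun y => hFb _)⟩
    apply Continuous.prodMk
    · exact continuous_const.add (continuous_finset_sum _ fun j _ =>
        (continuous_apply j).smul continuous_const)
    · exact continuous_const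
  have hfirst : ‖∫ y : Fin m → ℝ, (inn y - F (X y, ξ)) ∂γm‖
      ≤ t * ∑ j ∈ Finset.range m, M * ε j ^ 2 := by
    refine (norm_integral_le_of_norm_le (integrable_const _)
      (ae_of_all _ fun y => hinner y)).trans ?_
    rw [integral_const]
    simp
  have hsub : ∫ y : Fin m → ℝ, (inn y - F (X y, ξ)) ∂γm
      = (∫ y : Fin m → ℝ, inn y ∂γm) - ∫ y : Fin m → ℝ, F (X y, ξ) ∂γm :=
    integral_sub hinnint hgint
  have hdecomp : (∫ y : Fin m → ℝ, inn y ∂γm) - F (x, ξ)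
      = (∫ y : Fin m → ℝ, (inn y - F (X y, ξ)) ∂γm)
        + ((∫ y : Fin m → ℝ, F (X y, ξ) ∂γm) - F (x, ξ)) := by
    rw [hsub]; abel
  have hmain : ‖(∫ y : Fin m → ℝ, inn y ∂γm) - F (x, ξ)‖
      ≤ 2 * M * t * (∑ j ∈ Finset.range m, (ε j) ^ 2) := by
    rw [hdecomp]
    calc ‖_ + _‖ ≤ ‖∫ y : Fin m → ℝ, (inn y - F (X y, ξ)) ∂γm‖
          + ‖(∫ y : Fin m → ℝ, F (X y, ξ) ∂γm) - F (x, ξ)‖ := norm_add_le _ _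
      _ ≤ t * (∑ j ∈ Finset.range m, M * ε j ^ 2)
          + t * (∑ j ∈ Finset.range m, M * ε j ^ 2) := add_le_add hfirst houter
      _ = 2 * M * t * (∑ j ∈ Finset.range m, (ε j) ^ 2) := by
          rw [← Finset.mul_sum]
          ring
  have htail : (0:ℝ) ≤ 4 * M * ∑' j : ℕ, ε (m + j) := by
    have : (0:ℝ) ≤ ∑' j : ℕ, ε (m + j) := tsum_nonneg fun j => hε _
    positivity
  exact hmain.trans (le_add_of_nonneg_right htail)
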